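/- For every unit quaternion x, the orbit of x under left multiplication by the unit complex numbers inside ℍ, namely {(cos t + (sin t)·i) * x : t ∈ ℝ}, equals the intersection of the unit sphere S³ ⊂ ℍ with the two-dimensional real linear subspace of ℍ spanned by x and i * x. In particular, each such orbit (each Clifford parallel, i.e. each fiber of the Hopf fibration) is a great circle of S³. -/

import Mathlib

open Quaternion

/-- The imaginary unit `i` of Hamilton's quaternions. -/
def quatI : ℍ[ℝ] := ⟨0, 1, 0, 0⟩

/-- The unit quaternion `cos t + (sin t) · i`. -/
noncomputable def circleQuat (t : ℝ) : ℍ[ℝ] := ⟨Real.cos t, Real.sin t, 0, 0⟩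

def qab (a b : ℝ) : ℍ[ℝ] := ⟨a, b, 0, 0⟩

lemma quat_ab_eq (a b : ℝ) : qab a b = a • (1 : ℍ[ℝ]) + b • quatI := by
  ext <;> simp [qab, Quaternion.re_smul] <;> simp [quatI]

lemma quat_ab_mul (a b : ℝ) (x : ℍ[ℝ]) :
    qab a b * x = a • x + b • (quatI * x) := by
  rw [quat_ab_eq, add_mul, smul_mul_assoc, smul_mul_assoc, one_mul]

lemma circleQuat_eq (t : ℝ) : circleQuat t = qab (Real.cos t) (Real.sin t) := rfl

lemma quat_ab_norm (a b : ℝ) : ‖qab a b‖ = Real.sqrt (a ^ 2 + b ^ 2) := by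
  rw [norm_eq_sqrt_real_inner, Quaternion.inner_self]
  rw [Quaternion.normSq_def']
  simp [qab, sq]

/-- For every unit quaternion `x`, the orbit `{(cos t + sin t · i) * x : t ∈ ℝ}` of `x`
under left multiplication by the unit complex numbers inside `ℍ` equals the intersection
of the unit sphere `S³ ⊂ ℍ` with the two-dimensional real subspace spanned by `x` and
`i * x`.  In particular each such orbit (each Clifford parallel, i.e. each fiber of the
Hopf fibration) is a great circle of `S³`. -/
theorem clifford_parallel_is_great_circle (x : ℍ[ℝ]) (hx : ‖x‖ = 1) :
    {y : ℍ[ℝ] | ∃ t : ℝ, y = circleQuat t * x} =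
        Metric.sphere (0 : ℍ[ℝ]) 1 ∩
          (Submodule.span ℝ {x, quatI * x} : Set ℍ[ℝ]) ∧
      Module.finrank ℝ (Submodule.span ℝ {x, quatI * x}) = 2 := by
  have hmulnorm : ∀ a b : ℝ, ‖a • x + b • (quatI * x)‖ = Real.sqrt (a ^ 2 + b ^ 2) := by
    intro a b
    rw [← quat_ab_mul, norm_mul, hx, mul_one, quat_ab_norm]
  constructor
  · ext y
    simp only [Set.mem_setOf_eq, Set.mem_inter_iff, Metric.mem_sphere, dist_zero_right,
      SetLike.mem_coe, Submodule.mem_span_pair]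
    constructor
    · rintro ⟨t, rfl⟩
      refine ⟨?_, Real.cos t, Real.sin t, ?_⟩
      · rw [circleQuat_eq, quat_ab_mul, hmulnorm]
        rw [Real.cos_sq_add_sin_sq, Real.sqrt_one]
      · rw [circleQuat_eq, quat_ab_mul]
    · rintro ⟨hy, a, b, rfl⟩
      rw [hmulnorm] at hy
      have hab : a ^ 2 + b ^ 2 = 1 := by
        have h0 : (0:ℝ) ≤ a ^ 2 + b ^ 2 := by positivity
        nlinarith [Real.sq_sqrt h0]
      -- find t with cos t = a, sin t = b
      set z : ℂ := ⟨a, b⟩ with hz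
      have habs : ‖z‖ = 1 := by
        simp [Complex.norm_def, Complex.normSq, hz, Complex.normSq_mk, ← sq, hab]
      refine ⟨Complex.arg z, ?_⟩
      have hc : Real.cos (Complex.arg z) = a := by
        rw [Complex.cos_arg, habs] at *
        · simp [hz]
        · intro h; rw [h] at habs; simp at habs
      have hs : Real.sin (Complex.arg z) = b := by
        have := Complex.sin_arg z
        rw [habs] at this
        simp [hz] at this
        simpa [hz] using this
      rw [circleQuat_eq, quat_ab_mul, hc, hs]
  · have hli : LinearIndependent ℝ ![x, quatI * x] := by
      apply LinearIndependent.pair_iff.2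
      intro s t hst
      have : Real.sqrt (s ^ 2 + t ^ 2) = 0 := by rw [← hmulnorm, hst, norm_zero]
      have h0 : (0:ℝ) ≤ s ^ 2 + t ^ 2 := by positivity
      have : s ^ 2 + t ^ 2 = 0 := by nlinarith [Real.sq_sqrt h0, Real.sqrt_nonneg (s^2+t^2)]
      constructor <;> nlinarith
    have hrange : Set.range ![x, quatI * x] = {x, quatI * x} := by
      ext y; simp [Matrix.range_cons, Matrix.range_empty, or_comm]
    rw [← hrange, finrank_span_eq_card hli, Fintype.card_fin]
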